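/- Let F be the free semigroup on two generators a, b, and let c₀ be the smallest congruence on F containing, for all elements x, y, z, t ∈ F, the pairs (xyzt, tzyx), (x²y, yx²), (xyx, yxy), and (x²yz, y²zx). Then the images in the quotient F/c₀ance of the six words a²b, aba, ab², ba, ab, a³b are pairwise distinct. -/

import Mathlib

/-- All substitution instances of the identities
`xyzt = tzyx`, `x²y = yx²`, `xyx = yxy`, `x²yz = y²zx`. -/
def m21Rel : FreeSemigroup (Fin 2) → FreeSemigroup (Fin 2) → Prop := fun u v =>
  (∃ x y z t : FreeSemigroup (Fin 2), u = x * y * z * t ∧ v = t * z * y * x) ∨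
  (∃ x y : FreeSemigroup (Fin 2), u = x * x * y ∧ v = y * (x * x)) ∨
  (∃ x y : FreeSemigroup (Fin 2), u = x * y * x ∧ v = y * x * y) ∨
  (∃ x y z : FreeSemigroup (Fin 2), u = x * x * y * z ∧ v = y * y * z * x)

/-- A 12-element model: words of length ≤ 3 modulo the relations, with all
longer words collapsed to a single absorbing element `11`. -/
def M21 := Fin 12

instance : DecidableEq M21 := inferInstanceAs (DecidableEq (Fin 12))
instance : Fintype M21 := inferInstanceAs (Fintype (Fin 12))

def m21tbl : List (List (Fin 12)) := [
  [2, 3, 9, 6, 7, 8, 11, 11, 11, 11, 11, 11],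
  [4, 5, 6, 7, 8, 10, 11, 11, 11, 11, 11, 11],
  [9, 6, 11, 11, 11, 11, 11, 11, 11, 11, 11, 11],
  [7, 8, 11, 11, 11, 11, 11, 11, 11, 11, 11, 11],
  [6, 7, 11, 11, 11, 11, 11, 11, 11, 11, 11, 11],
  [8, 10, 11, 11, 11, 11, 11, 11, 11, 11, 11, 11],
  [11, 11, 11, 11, 11, 11, 11, 11, 11, 11, 11, 11],
  [11, 11, 11, 11, 11, 11, 11, 11, 11, 11, 11, 11],
  [11, 11, 11, 11, 11, 11, 11, 11, 11, 11, 11, 11],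
  [11, 11, 11, 11, 11, 11, 11, 11, 11, 11, 11, 11],
  [11, 11, 11, 11, 11, 11, 11, 11, 11, 11, 11, 11],
  [11, 11, 11, 11, 11, 11, 11, 11, 11, 11, 11, 11]]

instance : Mul M21 :=
  ⟨fun i j => ((m21tbl.getD (show Fin 12 from i).1 []).getD (show Fin 12 from j).1 0 : Fin 12)⟩

instance : Semigroup M21 where
  mul_assoc := by decide

theorem m21_id1 : ∀ p q r s : M21, p * q * r * s = s * r * q * p := by decide
theorem m21_id2 : ∀ p q : M21, p * p * q = q * (p * p) := by decide
theorem m21_id3 : ∀ p q : M21, p * q * p = q * p * q := by decide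
theorem m21_id4 : ∀ p q r : M21, p * p * q * r = q * q * r * p := by decide

def m21gen : Fin 2 → M21 := fun i => (⟨i.1, by omega⟩ : Fin 12)

def m21phi : FreeSemigroup (Fin 2) →ₙ* M21 := FreeSemigroup.lift m21gen

theorem m21_le : conGen m21Rel ≤ Con.ker m21phi := by
  refine Con.conGen_le.mpr ?_
  rintro u v (⟨x, y, z, t, rfl, rfl⟩ | ⟨x, y, rfl, rfl⟩ | ⟨x, y, rfl, rfl⟩ |
    ⟨x, y, z, rfl, rfl⟩) <;>
    show m21phi _ = m21phi _ <;> simp only [map_mul]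
  · exact m21_id1 _ _ _ _
  · exact m21_id2 _ _
  · exact m21_id3 _ _
  · exact m21_id4 _ _ _

theorem m21_sep (u v : FreeSemigroup (Fin 2)) (h : m21phi u ≠ m21phi v) :
    (↑u : (conGen m21Rel).Quotient) ≠ ↑v := fun he => h (Con.le_def.mp m21_le ((Con.eq _).mp he))

/-- In the free semigroup on two generators `a b` modulo the smallest
congruence generated by all instances of `xyzt = tzyx`, `x²y = yx²`,
`xyx = yxy`, `x²yz = y²zx`, the images of `a²b`, `aba`, `ab²`, `ba`, `ab`, `a³b`
are pairwise distinct. -/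
theorem stmt_13 :
    let a := FreeSemigroup.of (0 : Fin 2)
    let b := FreeSemigroup.of (1 : Fin 2)
    ([a * a * b, a * b * a, a * b * b, b * a, a * b, a * a * a * b].map
        (fun w => (w : (conGen m21Rel).Quotient))).Pairwise (· ≠ ·) := by
  intro a b
  show List.Pairwise (· ≠ ·)
    [((a * a * b : FreeSemigroup (Fin 2)) : (conGen m21Rel).Quotient),
     ↑(a * b * a), ↑(a * b * b), ↑(b * a), ↑(a * b), ↑(a * a * a * b)]
  simp only [List.pairwise_cons, List.mem_cons, List.not_mem_nil, or_false, and_true,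
    List.mem_singleton]
  refine ⟨fun w hw => ?_, fun w hw => ?_, fun w hw => ?_, fun w hw => ?_, fun w hw => ?_,
    fun _ h => h.elim, List.Pairwise.nil⟩ <;>
    [rcases hw with rfl | rfl | rfl | rfl | rfl;
     rcases hw with rfl | rfl | rfl | rfl;
     rcases hw with rfl | rfl | rfl;
     rcases hw with rfl | rfl;
     rcases hw with rfl] <;>
    refine m21_sep _ _ ?_ <;>
    simp only [a, b, map_mul, m21phi, FreeSemigroup.lift_of] <;>
    decide
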